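/- For any constraint σ of domain d, there exists an instantiation ρ ∈ Inst(d) with ρ ε σ if and only if fold(σ) ε σ, where fold iterates the witness builder along projections: fold(σ) is the empty instantiation when d is the initial domain, and fold(σ) = (fold(π(σ)), X ↦ bind_σ(fold(π(σ)))) when d = d',X. -/

import Mathlib

/-- Instantiations of a domain with `n` meta-variables (eigenvariables are
ignored: they leave both instantiations and constraints unchanged):
an instantiation of domain `d,X` is an instantiation of `d` together with a
ground term for `X`; the only instantiation of the initial domain is the
empty one. -/
def Inst.{u_1} (T : Type u_1) : ℕ → Type u_1
| 0 => PUnit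
| n + 1 => Inst T n × T

/-- A constraint structure with projections, a compatibility relation and a
witness builder. `T` is the set of ground terms. -/
structure CS (T : Type*) where
  Psi : ℕ → Type*
  proj : ∀ {n}, Psi (n + 1) → Psi n
  eps : ∀ {n}, Inst T n → Psi n → Prop
  bind : ∀ {n}, Psi (n + 1) → Inst T n → T

/-- Folding a constraint: the canonical instantiation obtained by iterating the
witness builder along projections, down to the initial domain. -/
def CS.fold {T : Type*} (S : CS T) : ∀ {n}, S.Psi n → Inst T n
| 0, _ => PUnit.unit
| _ + 1, σ => (S.fold (S.proj σ), S.bind σ (S.fold (S.proj σ)))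

/-- Under axioms Aπ and Aε, a constraint `σ` is satisfiable (some instantiation
is compatible with it) iff its fold is compatible with it. -/
theorem satisfiable_iff_fold_compatible {T : Type*} (S : CS T)
    (Aproj : ∀ {n} (ρ : Inst T n) (t : T) (σ : S.Psi (n + 1)),
      S.eps (n := n + 1) (ρ, t) σ → S.eps ρ (S.proj σ))
    (Aeps : ∀ {n} (ρ : Inst T n) (σ : S.Psi (n + 1)),
      S.eps ρ (S.proj σ) → S.eps (n := n + 1) (ρ, S.bind σ ρ) σ)
    {n : ℕ} (σ : S.Psi n) :
    (∃ ρ : Inst T n, S.eps ρ σ) ↔ S.eps (S.fold σ) σ := by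
  constructor
  · intro h
    induction n with
    | zero =>
      obtain ⟨ρ, hρ⟩ := h
      exact hρ
    | succ n ih =>
      obtain ⟨⟨ρ, t⟩, hρ⟩ := h
      exact Aeps _ σ (ih (S.proj σ) ⟨ρ, Aproj ρ t σ hρ⟩)
  · intro h
    exact ⟨S.fold σ, h⟩
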